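/- Given an expansion q of p in E^d, the family of maps f_i(t) = ((p_i+q_i)/2 + cos(πt)·(p_i-q_i)/2, sin(πt)·(p_i-q_i)/2) into E^{2d} = E^d × E^d is a continuous expansion from p to q: each f_i is continuous, f_i(0) = (p_i, 0), f_i(1) = (q_i, 0), and for all i < j the function t ↦ |f_i(t) - f_j(t)| is non-decreasing on [0,1]. -/

import Mathlib

open scoped RealInnerProductSpace

lemma aux_norm_sq {E : Type*} [NormedAddCommGroup E] [InnerProductSpace ℝ E]
    (c m : E) (t : ℝ) :
    ‖c + Real.cos t • m‖ ^ 2 + ‖Real.sin t • m‖ ^ 2 =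
      ‖c‖ ^ 2 + ‖m‖ ^ 2 + 2 * Real.cos t * ⟪c, m⟫ := by
  rw [norm_add_sq_real, norm_smul, norm_smul, real_inner_smul_right, mul_pow, mul_pow]
  have h : Real.cos t ^ 2 + Real.sin t ^ 2 = 1 := by
    rw [add_comm]; exact Real.sin_sq_add_cos_sq t
  have h2 : ‖Real.cos t‖ ^ 2 + ‖Real.sin t‖ ^ 2 = 1 := by
    simpa [sq_abs] using h
  nlinarith [h2]

lemma aux_inner {E : Type*} [NormedAddCommGroup E] [InnerProductSpace ℝ E]
    (P Q : E) : ⟪P + Q, P - Q⟫ = ‖P‖ ^ 2 - ‖Q‖ ^ 2 := by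
  rw [inner_add_left, inner_sub_right, inner_sub_right, real_inner_comm Q P,
    real_inner_self_eq_norm_sq, real_inner_self_eq_norm_sq]
  ring

theorem continuous_expansion_in_double_dimension (d N : ℕ)
    (p q : Fin N → EuclideanSpace ℝ (Fin d))
    (hexp : ∀ i j : Fin N, i < j → ‖p i - p j‖ ≤ ‖q i - q j‖)
    (f : Fin N → ℝ → WithLp 2 (EuclideanSpace ℝ (Fin d) × EuclideanSpace ℝ (Fin d)))
    (hf : ∀ i t, f i t =
      (WithLp.equiv 2 (EuclideanSpace ℝ (Fin d) × EuclideanSpace ℝ (Fin d))).symm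
        ((1 / 2 : ℝ) • (p i + q i) + Real.cos (Real.pi * t) • ((1 / 2 : ℝ) • (p i - q i)),
         Real.sin (Real.pi * t) • ((1 / 2 : ℝ) • (p i - q i)))) :
    (∀ i, Continuous (f i)) ∧
    (∀ i, f i 0 =
      (WithLp.equiv 2 (EuclideanSpace ℝ (Fin d) × EuclideanSpace ℝ (Fin d))).symm (p i, 0)) ∧
    (∀ i, f i 1 =
      (WithLp.equiv 2 (EuclideanSpace ℝ (Fin d) × EuclideanSpace ℝ (Fin d))).symm (q i, 0)) ∧
    (∀ i j : Fin N, i < j →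
      MonotoneOn (fun t => ‖f i t - f j t‖) (Set.Icc (0 : ℝ) 1)) := by
  refine ⟨?_, ?_, ?_, ?_⟩
  · intro i
    have : f i = fun t =>
        (WithLp.equiv 2 (EuclideanSpace ℝ (Fin d) × EuclideanSpace ℝ (Fin d))).symm
        ((1 / 2 : ℝ) • (p i + q i) + Real.cos (Real.pi * t) • ((1 / 2 : ℝ) • (p i - q i)),
         Real.sin (Real.pi * t) • ((1 / 2 : ℝ) • (p i - q i))) := funext (hf i)
    rw [this]
    exact (WithLp.prod_continuous_toLp ..).comp (by fun_prop)
  · intro i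
    rw [hf i 0]
    congr 1
    simp
    module
  · intro i
    rw [hf i 1]
    congr 1
    rw [mul_one, Real.cos_pi, Real.sin_pi, Prod.mk.injEq]
    constructor
    · module
    · simp
  · intro i j hij
    set P := p i - p j with hP
    set Q := q i - q j with hQ
    set c : EuclideanSpace ℝ (Fin d) := (1 / 2 : ℝ) • (P + Q) with hc
    set m : EuclideanSpace ℝ (Fin d) := (1 / 2 : ℝ) • (P - Q) with hm
    have hdiff : ∀ t : ℝ, f i t - f j t =
        (WithLp.equiv 2 (EuclideanSpace ℝ (Fin d) × EuclideanSpace ℝ (Fin d))).symm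
          (c + Real.cos (Real.pi * t) • m, Real.sin (Real.pi * t) • m) := by
      intro t
      rw [hf i t, hf j t, WithLp.equiv_symm_apply, ← WithLp.toLp_sub, Prod.mk_sub_mk]
      congr 1
      rw [Prod.mk.injEq]
      constructor
      · rw [hc, hm, hP, hQ]; module
      · rw [hm, hP, hQ]; module
    have hnormsq : ∀ t : ℝ, ‖f i t - f j t‖ ^ 2 =
        ‖c‖ ^ 2 + ‖m‖ ^ 2 + 2 * Real.cos (Real.pi * t) * ⟪c, m⟫ := by
      intro t
      rw [hdiff t, WithLp.prod_norm_sq_eq_of_L2]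
      simpa using aux_norm_sq c m (Real.pi * t)
    have hcm : ⟪c, m⟫ ≤ 0 := by
      rw [hc, hm, real_inner_smul_left, real_inner_smul_right, aux_inner]
      have h := hexp i j hij
      nlinarith [norm_nonneg (p i - p j), norm_nonneg (q i - q j)]
    intro s hs t ht hst
    have hcos : Real.cos (Real.pi * t) ≤ Real.cos (Real.pi * s) := by
      apply Real.cos_le_cos_of_nonneg_of_le_pi
      · exact mul_nonneg Real.pi_pos.le hs.1
      · calc Real.pi * t ≤ Real.pi * 1 := by
              have := ht.2; nlinarith [Real.pi_pos]
          _ = Real.pi := mul_one _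
      · nlinarith [Real.pi_pos, hs.1]
    have hsq : ‖f i s - f j s‖ ^ 2 ≤ ‖f i t - f j t‖ ^ 2 := by
      rw [hnormsq s, hnormsq t]
      nlinarith
    exact (pow_le_pow_iff_left₀ (norm_nonneg _) (norm_nonneg _) two_ne_zero).mp hsq
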